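/- Let V be a real inner product space, n ≥ 3, and let W₁, …, Wₙ ∈ V be linearly independent vectors such that for every index j and all indices i, k different from j one has ⟨Wᵢ, Wⱼ⟩Wᵢ − ⟨Wᵢ, Wᵢ⟩Wⱼ = ⟨Wₖ, Wⱼ⟩Wₖ − ⟨Wₖ, Wₖ⟩Wⱼ. Then ⟨Wᵢ, Wⱼ⟩ = 0 for all i ≠ j, and ‖Wᵢ‖ = ‖Wⱼ‖ for all i, j. -/

import Mathlib

/-- Auxiliary: three distinct members of a linearly independent family have only the
trivial linear relation. -/
lemma rolling_aux {V : Type*} [AddCommGroup V] [Module ℝ V]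
    {n : ℕ} {W : Fin n → V} (hW : LinearIndependent ℝ W)
    {i j k : Fin n} (hij : i ≠ j) (hik : i ≠ k) (hjk : j ≠ k)
    {a b c : ℝ} (hrel : a • W i + b • W j + c • W k = 0) :
    a = 0 ∧ b = 0 ∧ c = 0 := by
  rw [Fintype.linearIndependent_iff] at hW
  have key := hW (fun x => (if x = i then a else 0) + (if x = j then b else 0) +
    (if x = k then c else 0)) ?_
  · refine ⟨?_, ?_, ?_⟩
    · have := key i; simpa [hij, hik] using this
    · have := key j; simpa [hij.symm, hjk] using this
    · have := key k; simpa [hik.symm, hjk.symm] using this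
  · simp only [add_smul, ite_smul, zero_smul, Finset.sum_add_distrib,
      Finset.sum_ite_eq', Finset.mem_univ, if_true]
    exact hrel

/-- Let `V` be a real inner product space, `n ≥ 3`, and let `W₁, …, Wₙ ∈ V` be linearly
independent vectors such that for every index `j` and all indices `i, k` different
from `j` one has `⟪Wᵢ, Wⱼ⟫ Wᵢ − ⟪Wᵢ, Wᵢ⟫ Wⱼ = ⟪Wₖ, Wⱼ⟫ Wₖ − ⟪Wₖ, Wₖ⟫ Wⱼ`.
Then `⟪Wᵢ, Wⱼ⟫ = 0` for all `i ≠ j`, and `‖Wᵢ‖ = ‖Wⱼ‖` for all `i, j`. -/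
theorem rolling_frame_orthogonal_equal_norms
    {V : Type*} [NormedAddCommGroup V] [InnerProductSpace ℝ V]
    (n : ℕ) (hn : 3 ≤ n) (W : Fin n → V) (hW : LinearIndependent ℝ W)
    (h : ∀ j i k : Fin n, i ≠ j → k ≠ j →
      (inner ℝ (W i) (W j) : ℝ) • W i - (inner ℝ (W i) (W i) : ℝ) • W j =
        (inner ℝ (W k) (W j) : ℝ) • W k - (inner ℝ (W k) (W k) : ℝ) • W j) :
    (∀ i j : Fin n, i ≠ j → (inner ℝ (W i) (W j) : ℝ) = 0) ∧
    (∀ i j : Fin n, ‖W i‖ = ‖W j‖) := by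
  -- For any distinct i, j, pick a third index and extract all conclusions at once
  have main : ∀ i j : Fin n, i ≠ j →
      (inner ℝ (W i) (W j) : ℝ) = 0 ∧ (inner ℝ (W i) (W i) : ℝ) = inner ℝ (W j) (W j) := by
    intro i j hij
    -- find k distinct from i and j
    obtain ⟨k, hk, hki⟩ : ∃ k ∈ ({i}ᶜ : Finset (Fin n)), k ≠ j := by
      apply Finset.exists_mem_ne
      rw [Finset.card_compl, Finset.card_singleton, Fintype.card_fin]
      omega
    have hki' : k ≠ i := by simpa using hk
    -- relation with j in the middle role:
    have h1 := h j i k hij hki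
    have rel1 : (inner ℝ (W i) (W j) : ℝ) • W i + (-(inner ℝ (W k) (W j) : ℝ)) • W k +
        ((inner ℝ (W k) (W k) : ℝ) - inner ℝ (W i) (W i)) • W j = 0 := by
      rw [sub_eq_sub_iff_sub_eq_sub] at h1
      rw [neg_smul, sub_smul]
      abel_nf
      abel_nf at h1
      linear_combination (norm := abel) h1
    have c1 := rolling_aux hW hki'.symm hij hki rel1
    -- relation with k in the middle role (to compare ⟨Wi,Wi⟩ with ⟨Wj,Wj⟩):
    have h2 := h k i j hki'.symm (Ne.symm hki)
    have rel2 : (inner ℝ (W i) (W k) : ℝ) • W i + (-(inner ℝ (W j) (W k) : ℝ)) • W j +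
        ((inner ℝ (W j) (W j) : ℝ) - inner ℝ (W i) (W i)) • W k = 0 := by
      rw [sub_eq_sub_iff_sub_eq_sub] at h2
      rw [neg_smul, sub_smul]
      abel_nf
      abel_nf at h2
      linear_combination (norm := abel) h2
    have c2 := rolling_aux hW hij hki'.symm (Ne.symm hki) rel2
    exact ⟨c1.1, by linarith [c2.2.2]⟩
  constructor
  · exact fun i j hij => (main i j hij).1
  · intro i j
    by_cases hij : i = j
    · rw [hij]
    · have hsq := (main i j hij).2
      rw [real_inner_self_eq_norm_sq, real_inner_self_eq_norm_sq] at hsq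
      nlinarith [norm_nonneg (W i), norm_nonneg (W j)]
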